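/- Let ν be a probability measure on (Fin d → ℝ) concentrated on nonnegative vectors, and let μ be its Poisson compound on (Fin d → ℕ). Then for every t : Fin d → ℂ with (t j).re ≤ 0 for all j, one has ∫ exp(∑ j, t j · (x j : ℂ)) dμ(x) = ∫ exp(∑ j, (y j : ℂ) · (exp(t j) − 1)) dν(y). -/

import Mathlib

open MeasureTheory ProbabilityTheory

/-- Poisson compound of a measure `ν` on `Fin d → ℝ`: conditionally on `y ~ ν`, the
coordinates are independent Poisson variables with rates `y j`. -/
noncomputable def poissonCompound (d : ℕ) (ν : Measure (Fin d → ℝ)) : Measure (Fin d → ℕ) :=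
  ν.bind (fun y => Measure.pi (fun j => (poissonPMF (Real.toNNReal (y j))).toMeasure))

section Aux

open scoped ENNReal NNReal

lemma poissonPi_singleton (d : ℕ) (y : Fin d → ℝ) (x : Fin d → ℕ) :
    Measure.pi (fun j => (poissonPMF (Real.toNNReal (y j))).toMeasure) {x}
      = ∏ j, poissonPMF (Real.toNNReal (y j)) (x j) := by
  rw [show ({x} : Set (Fin d → ℕ)) = Set.pi Set.univ (fun j => {x j}) by
    simp [Set.univ_pi_singleton], Measure.pi_pi]
  congr 1
  ext j
  exact PMF.toMeasure_apply_singleton _ _ (measurableSet_singleton _)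

lemma measurable_poissonPi (d : ℕ) :
    Measurable (fun y : Fin d → ℝ =>
      Measure.pi (fun j => (poissonPMF (Real.toNNReal (y j))).toMeasure)) := by
  classical
  apply Measure.measurable_measure.2
  intro s hs
  have key : ∀ y : Fin d → ℝ,
      Measure.pi (fun j => (poissonPMF (Real.toNNReal (y j))).toMeasure) s
        = ∑' x : Fin d → ℕ, s.indicator
            (fun x => ∏ j, poissonPMF (Real.toNNReal (y j)) (x j)) x := by
    intro y
    rw [← Measure.tsum_indicator_apply_singleton _ s hs]
    congr 1
    ext x
    by_cases hx : x ∈ s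
    · rw [Set.indicator_of_mem hx, Set.indicator_of_mem hx]
      exact poissonPi_singleton d y x
    · rw [Set.indicator_of_notMem hx, Set.indicator_of_notMem hx]
  have hre : (fun y : Fin d → ℝ =>
      Measure.pi (fun j => (poissonPMF (Real.toNNReal (y j))).toMeasure) s)
      = fun y => ∑' x : Fin d → ℕ, if x ∈ s then ∏ j, poissonPMF (Real.toNNReal (y j)) (x j)
        else 0 := by
    ext y
    rw [key y]
    simp [Set.indicator_apply]
  rw [hre]
  apply Measurable.ennreal_tsum
  intro x
  by_cases hx : x ∈ s
  · simp only [if_pos hx]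
    apply Finset.measurable_prod
    intro j _
    have h1 : Measurable (fun r : ℝ => (poissonPMF (Real.toNNReal r)) (x j)) := by
      have he : (fun r : ℝ => (poissonPMF (Real.toNNReal r)) (x j))
          = fun r : ℝ => ENNReal.ofReal (poissonPMFReal (Real.toNNReal r) (x j)) := rfl
      rw [he]
      apply Measurable.ennreal_ofReal
      unfold poissonPMFReal
      fun_prop
    exact h1.comp (measurable_pi_apply j)
  · simp only [if_neg hx]
    exact measurable_const

/-- The Poisson kernel on `Fin d → ℕ`. -/
noncomputable def poissonCompKernel (d : ℕ) : ProbabilityTheory.Kernel (Fin d → ℝ) (Fin d → ℕ) :=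
  ⟨fun y => Measure.pi (fun j => (poissonPMF (Real.toNNReal (y j))).toMeasure),
    measurable_poissonPi d⟩

instance (d : ℕ) : ProbabilityTheory.IsMarkovKernel (poissonCompKernel d) :=
  ⟨fun _ => by
    show IsProbabilityMeasure (Measure.pi _)
    infer_instance⟩

lemma norm_cexp_le_one {z : ℂ} (hz : z.re ≤ 0) : ‖Complex.exp z‖ ≤ 1 := by
  rw [Complex.norm_exp]
  exact Real.exp_le_one_iff.2 hz

lemma poisson_mgf (r : ℝ≥0) (z : ℂ) (hz : z.re ≤ 0) :
    ∫ n : ℕ, Complex.exp (z * n) ∂((poissonPMF r).toMeasure)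
      = Complex.exp (r * (Complex.exp z - 1)) := by
  have hbound : ∀ n : ℕ, ‖Complex.exp (z * n)‖ ≤ 1 := by
    intro n
    apply norm_cexp_le_one
    simp only [Complex.mul_re, Complex.natCast_re, Complex.natCast_im, mul_zero, sub_zero]
    exact mul_nonpos_of_nonpos_of_nonneg hz (Nat.cast_nonneg n)
  have hint : Integrable (fun n : ℕ => Complex.exp (z * n)) ((poissonPMF r).toMeasure) := by
    apply Integrable.mono' (integrable_const (1 : ℝ))
    · exact (measurable_from_top (f := fun n : ℕ => Complex.exp (z * n))).aestronglyMeasurable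
    · exact Filter.Eventually.of_forall hbound
  rw [PMF.integral_eq_tsum _ _ hint]
  have h1 := NormedSpace.expSeries_div_hasSum_exp ((r : ℂ) * Complex.exp z)
  rw [← Complex.exp_eq_exp_ℂ] at h1
  have h2 := h1.mul_left (Complex.exp (-(r : ℂ)))
  have h3 : (fun n : ℕ => Complex.exp (-(r : ℂ)) * (((r : ℂ) * Complex.exp z) ^ n / n.factorial))
      = fun n : ℕ => ((poissonPMF r) n).toReal • Complex.exp (z * n) := by
    ext n
    have hpos : 0 ≤ poissonPMFReal r n := poissonPMFReal_nonneg
    rw [show ((poissonPMF r) n).toReal = poissonPMFReal r n by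
      rw [show (poissonPMF r) n = ENNReal.ofReal (poissonPMFReal r n) from rfl,
        ENNReal.toReal_ofReal hpos], Complex.real_smul]
    unfold poissonPMFReal
    push_cast [Complex.ofReal_exp]
    rw [mul_pow, mul_comm z (n : ℂ), Complex.exp_nat_mul]
    ring
  rw [h3] at h2
  rw [h2.tsum_eq]
  rw [← Complex.exp_add]
  ring_nf

end Aux

/-- Laplace transform of a Poisson compound: for `t` with nonpositive real parts,
`∫ e^{⟨t,x⟩} dμ(x) = ∫ e^{∑ yⱼ (e^{tⱼ} − 1)} dν(y)`. -/
theorem laplaceTransform_poissonCompound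
    (d : ℕ) (ν : Measure (Fin d → ℝ)) [IsProbabilityMeasure ν]
    (hν : ∀ᵐ y ∂ν, ∀ j, 0 ≤ y j)
    (t : Fin d → ℂ) (ht : ∀ j, (t j).re ≤ 0) :
    ∫ x, Complex.exp (∑ j, t j * (x j : ℂ)) ∂(poissonCompound d ν)
      = ∫ y, Complex.exp (∑ j, (y j : ℂ) * (Complex.exp (t j) - 1)) ∂ν := by
  classical
  set f : (Fin d → ℕ) → ℂ := fun x => Complex.exp (∑ j, t j * (x j : ℂ)) with hf_def
  have hf_meas : Measurable f := measurable_of_countable f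
  have hf_bound : ∀ x, ‖f x‖ ≤ 1 := by
    intro x
    apply norm_cexp_le_one
    rw [Complex.re_sum]
    apply Finset.sum_nonpos
    intro j _
    simp only [Complex.mul_re, Complex.natCast_re, Complex.natCast_im, mul_zero, sub_zero]
    exact mul_nonpos_of_nonpos_of_nonneg (ht j) (Nat.cast_nonneg _)
  -- rewrite the compound as the second marginal of a composition-product
  have hbind : poissonCompound d ν = (ν ⊗ₘ poissonCompKernel d).map Prod.snd := by
    ext s hs
    rw [Measure.map_apply measurable_snd hs,
      Measure.compProd_apply (measurable_snd hs),
      poissonCompound, Measure.bind_apply hs (measurable_poissonPi d).aemeasurable]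
    rfl
  have hint : Integrable (fun p : (Fin d → ℝ) × (Fin d → ℕ) => f p.2) (ν ⊗ₘ poissonCompKernel d) := by
    apply Integrable.mono' (integrable_const (1 : ℝ))
    · exact (hf_meas.comp measurable_snd).aestronglyMeasurable
    · exact Filter.Eventually.of_forall fun p => hf_bound p.2
  rw [hbind, integral_map measurable_snd.aemeasurable hf_meas.aestronglyMeasurable,
    Measure.integral_compProd hint]
  apply integral_congr_ae
  filter_upwards [hν] with y hy
  -- inner integral over the Poisson kernel
  have hker : (poissonCompKernel d) y
      = Measure.pi (fun j => (poissonPMF (Real.toNNReal (y j))).toMeasure) := rfl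
  letI m : ∀ _ : Fin d, MeasureSpace ℕ :=
    fun j => ⟨(poissonPMF (Real.toNNReal (y j))).toMeasure⟩
  have hprod := @MeasureTheory.integral_fintype_prod_volume_eq_prod ℂ (Fin d) _ _ (fun _ => ℕ)
    (fun j n => Complex.exp (t j * n)) m (fun j => by
      have : IsProbabilityMeasure ((m j).volume) :=
        PMF.toMeasure.isProbabilityMeasure _
      infer_instance)
  have hvol : (volume : Measure (Fin d → ℕ))
      = Measure.pi (fun j => (poissonPMF (Real.toNNReal (y j))).toMeasure) := rfl
  calc ∫ x, f x ∂((poissonCompKernel d) y)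
      = ∫ x : Fin d → ℕ, ∏ j, Complex.exp (t j * (x j : ℂ)) ∂(volume) := by
        rw [hker, ← hvol]
        congr 1
        ext x
        simp only [hf_def, Complex.exp_sum]
    _ = ∏ j, ∫ n : ℕ, Complex.exp (t j * n) ∂((poissonPMF (Real.toNNReal (y j))).toMeasure) :=
        hprod
    _ = ∏ j, Complex.exp ((y j : ℂ) * (Complex.exp (t j) - 1)) := by
        apply Finset.prod_congr rfl
        intro j _
        rw [poisson_mgf _ _ (ht j)]
        congr 2
        norm_cast
        rw [Real.coe_toNNReal _ (hy j)]
    _ = Complex.exp (∑ j, (y j : ℂ) * (Complex.exp (t j) - 1)) := (Complex.exp_sum _ _).symm
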